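/- arXiv:1901.04381 — 5 statements merged into one kernel-verified Lean document; each statement's English description precedes it below -/
import Mathlib

section
/- Let G be a finite group, K a normal subgroup of G, and A a subgroup of G that is NS-supplemented in G with NS-supplement B. Then AK/K is NS-supplemented in G/K, and BK/K is an NS-supplement of AK/K in G/K. -/
open Subgroup Pointwise

/-- `B` is an NS-supplement of `A` in `G`. -/
def IsNSSupplementOf {G : Type*} [Group G] (A B : Subgroup G) : Prop :=
  (A : Set G) * (B : Set G) = Set.univ ∧
  ∀ X : Subgroup G, X ≤ A → (X.subgroupOf A).Normal →
    ∀ p : ℕ, p.Prime → p ∣ Nat.card B →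
      ∃ Bp : Sylow p B,
        (X : Set G) * (((Bp : Subgroup B).map B.subtype : Subgroup G) : Set G) =
        (((Bp : Subgroup B).map B.subtype : Subgroup G) : Set G) * (X : Set G)

/-- `A` is NS-supplemented in `G`. -/
def IsNSSupplemented {G : Type*} [Group G] (A : Subgroup G) : Prop :=
  ∃ B : Subgroup G, IsNSSupplementOf A B

/-- Supersolvable: a normal series with cyclic factors. -/
def IsSupersolvableGroup (G : Type*) [Group G] : Prop :=
  ∃ σ : ℕ → Subgroup G, Monotone σ ∧ σ 0 = ⊥ ∧ (∃ n, σ n = ⊤) ∧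
    (∀ n, (σ n).Normal) ∧ ∀ n, ∃ g : G, σ (n + 1) = σ n ⊔ Subgroup.zpowers g

/-- p-solvable: a normal series whose factors are p-groups or p'-groups. -/
def IsPSolvableGroup (p : ℕ) (G : Type*) [Group G] : Prop :=
  ∃ σ : ℕ → Subgroup G, Monotone σ ∧ σ 0 = ⊥ ∧ (∃ n, σ n = ⊤) ∧
    (∀ n, (σ n).Normal) ∧
    ∀ n, (∃ k, (σ n).relIndex (σ (n + 1)) = p ^ k) ∨ ¬ p ∣ (σ n).relIndex (σ (n + 1))

/-- p-supersolvable: a normal series whose factors have order p or are p'-groups. -/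
def IsPSupersolvableGroup (p : ℕ) (G : Type*) [Group G] : Prop :=
  ∃ σ : ℕ → Subgroup G, Monotone σ ∧ σ 0 = ⊥ ∧ (∃ n, σ n = ⊤) ∧
    (∀ n, (σ n).Normal) ∧
    ∀ n, (σ n).relIndex (σ (n + 1)) = p ∨ ¬ p ∣ (σ n).relIndex (σ (n + 1))

/-- p-nilpotent: existence of a normal p-complement. -/
def IsPNilpotent (p : ℕ) (G : Type*) [Group G] : Prop :=
  ∃ N : Subgroup G, N.Normal ∧ ¬ p ∣ Nat.card N ∧ ∃ k, N.index = p ^ k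

/-- The projective special linear group PSL(2,7). -/
abbrev PSL27 :=
  Matrix.SpecialLinearGroup (Fin 2) (ZMod 7) ⧸
    Subgroup.center (Matrix.SpecialLinearGroup (Fin 2) (ZMod 7))

/-- If `K ⊴ G` and `B` is an NS-supplement of `A` in `G`, then `BK/K` is an
NS-supplement of `AK/K` in `G/K`. -/
theorem stmt1 {G : Type*} [Group G] [Finite G] (K : Subgroup G) [K.Normal]
    (A B : Subgroup G) (h : IsNSSupplementOf A B) :
    IsNSSupplementOf (A.map (QuotientGroup.mk' K)) (B.map (QuotientGroup.mk' K)) := by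
  set φ := QuotientGroup.mk' K with hφ
  have hsurj : Function.Surjective φ := QuotientGroup.mk'_surjective K
  constructor
  · rw [Subgroup.coe_map, Subgroup.coe_map, ← Set.image_mul, h.1, Set.image_univ,
      Set.range_eq_univ.mpr hsurj]
  · intro Xbar hle hnorm p hp hdvd
    haveI : Fact p.Prime := ⟨hp⟩
    set X : Subgroup G := (Xbar.comap φ) ⊓ A with hX
    have hXA : X ≤ A := inf_le_right
    have hmap : X.map φ = Xbar := by
      apply le_antisymm
      · exact Subgroup.map_le_iff_le_comap.mpr inf_le_left
      · intro xb hxb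
        obtain ⟨a, haA, rfl⟩ := hle hxb
        exact ⟨a, ⟨Subgroup.mem_comap.mpr hxb, haA⟩, rfl⟩
    have hnormX : (X.subgroupOf A).Normal := by
      constructor
      intro n hn a
      rw [Subgroup.mem_subgroupOf] at hn ⊢
      rw [Subgroup.mem_inf]
      refine ⟨?_, A.mul_mem (A.mul_mem a.2 hn.2) (A.inv_mem a.2)⟩
      rw [Subgroup.mem_comap]
      have := hnorm.conj_mem ⟨φ n, n.1, hn.2, rfl⟩
        (Subgroup.mem_subgroupOf.mpr hn.1) ⟨φ a, a.1, a.2, rfl⟩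
      rw [Subgroup.mem_subgroupOf] at this
      simpa using this
    have hdvdB : p ∣ Nat.card B :=
      hdvd.trans (Subgroup.card_dvd_of_surjective (φ.subgroupMap B)
        (φ.subgroupMap_surjective B))
    obtain ⟨Bp, hBp⟩ := h.2 X hXA hnormX p hp hdvdB
    refine ⟨Bp.mapSurjective (φ.subgroupMap_surjective B), ?_⟩
    have hcoe : ((Bp.mapSurjective (φ.subgroupMap_surjective B) : Subgroup (B.map φ)).map
        (B.map φ).subtype) = ((Bp : Subgroup B).map B.subtype).map φ := by
      rw [Sylow.coe_mapSurjective, Subgroup.map_map, Subgroup.map_map]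
      congr 1
    rw [hcoe, ← hmap, Subgroup.coe_map φ X,
      Subgroup.coe_map φ ((Bp : Subgroup B).map B.subtype),
      ← Set.image_mul, ← Set.image_mul, hBp]
end

section
/- Let G be a finite group in which every maximal subgroup is NS-supplemented in G. Then every maximal subgroup of G has prime power index. -/
open Subgroup Pointwise

/-- If `H` and `K` permute as sets, the carrier of `H ⊔ K` is `↑H * ↑K`. -/
lemma sup_coe_of_mul_comm {G : Type*} [Group G] (H K : Subgroup G)
    (hc : (H : Set G) * (K : Set G) = (K : Set G) * (H : Set G)) :
    ((H ⊔ K : Subgroup G) : Set G) = (H : Set G) * (K : Set G) := by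
  let S : Subgroup G :=
    { carrier := (H : Set G) * (K : Set G)
      one_mem' := ⟨1, H.one_mem, 1, K.one_mem, mul_one 1⟩
      mul_mem' := by
        rintro a b ⟨h1, hh1, k1, hk1, rfl⟩ ⟨h2, hh2, k2, hk2, rfl⟩
        have : k1 * h2 ∈ (H : Set G) * (K : Set G) := by
          rw [hc]; exact ⟨k1, hk1, h2, hh2, rfl⟩
        obtain ⟨h3, hh3, k3, hk3, he⟩ := this
        refine ⟨h1 * h3, H.mul_mem hh1 hh3, k3 * k2, K.mul_mem hk3 hk2, ?_⟩
        calc h1 * h3 * (k3 * k2) = h1 * (h3 * k3) * k2 := by group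
          _ = h1 * (k1 * h2) * k2 := by rw [show h3 * k3 = k1 * h2 from he]
          _ = h1 * k1 * (h2 * k2) := by group
      inv_mem' := by
        rintro a ⟨h1, hh1, k1, hk1, rfl⟩
        show (h1 * k1)⁻¹ ∈ (H : Set G) * (K : Set G)
        rw [hc, mul_inv_rev]
        exact ⟨k1⁻¹, K.inv_mem hk1, h1⁻¹, H.inv_mem hh1, rfl⟩ }
  have hHK : H ⊔ K = S := by
    apply le_antisymm
    · refine sup_le (fun x hx => ?_) (fun x hx => ?_)
      · exact ⟨x, hx, 1, K.one_mem, mul_one x⟩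
      · exact ⟨1, H.one_mem, x, hx, one_mul x⟩
    · rintro x ⟨h1, hh1, k1, hk1, rfl⟩
      exact mul_mem (le_sup_left (α := Subgroup G) hh1)
        (le_sup_right (α := Subgroup G) hk1)
  rw [hHK]; rfl

/-- If `↑K * ↑H = univ` then the index of `H` divides the cardinality of `K`. -/
lemma index_dvd_card_of_cover {G : Type*} [Group G] (K H : Subgroup G)
    (hc : (K : Set G) * (H : Set G) = Set.univ) : H.index ∣ Nat.card K := by
  let f : K ⧸ H.subgroupOf K → G ⧸ H := fun x =>
    Quotient.liftOn' x (fun k => (QuotientGroup.mk (k : G) : G ⧸ H)) (by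
      intro a b hab
      rw [QuotientGroup.leftRel_apply] at hab
      exact (QuotientGroup.eq (s := H) (a := (a : G)) (b := (b : G))).mpr (by
        simpa [Subgroup.mem_subgroupOf] using hab))
  have hbij : Function.Bijective f := by
    constructor
    · intro x y
      induction x using Quotient.inductionOn'
      induction y using Quotient.inductionOn'
      rename_i a b
      intro hab
      have : (a : G)⁻¹ * (b : G) ∈ H :=
        (QuotientGroup.eq (s := H) (a := (a : G)) (b := (b : G))).mp hab
      refine Quotient.sound' ((QuotientGroup.leftRel_apply).mpr ?_)
      simpa [Subgroup.mem_subgroupOf] using this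
    · intro y
      induction y using Quotient.inductionOn'
      rename_i g
      have hg : g ∈ (K : Set G) * (H : Set G) := by rw [hc]; exact Set.mem_univ g
      obtain ⟨k, hk, m, hm, rfl⟩ := hg
      refine ⟨QuotientGroup.mk (⟨k, hk⟩ : K), ?_⟩
      show (QuotientGroup.mk k : G ⧸ H) = QuotientGroup.mk (k * m)
      exact (QuotientGroup.eq (s := H) (a := k) (b := k * m)).mpr (by simpa using hm)
  have hcard : H.index = (H.subgroupOf K).index := by
    show Nat.card (G ⧸ H) = Nat.card (K ⧸ H.subgroupOf K)
    exact (Nat.card_eq_of_bijective f hbij).symm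
  rw [hcard]
  exact Subgroup.index_dvd_card _

/-- If every maximal subgroup of `G` is NS-supplemented in `G`, then every
maximal subgroup of `G` has prime power index. -/
theorem stmt8 {G : Type*} [Group G] [Finite G]
    (h : ∀ M : Subgroup G, IsCoatom M → IsNSSupplemented M) :
    ∀ M : Subgroup G, IsCoatom M → ∃ r k : ℕ, r.Prime ∧ M.index = r ^ k := by
  intro M hM
  obtain ⟨B, hBuniv, hBprop⟩ := h M hM
  have hnormal : ((M : Subgroup G).subgroupOf M).Normal := by
    rw [Subgroup.subgroupOf_self]; infer_instance
  have key : ∃ (q : ℕ) (_ : q.Prime) (P : Sylow q B),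
      ((M : Set G) * (((P : Subgroup B).map B.subtype : Subgroup G) : Set G) =
        (((P : Subgroup B).map B.subtype : Subgroup G) : Set G) * (M : Set G)) ∧
      ¬ (P : Subgroup B).map B.subtype ≤ M := by
    by_contra hcon
    push_neg at hcon
    have hBle : B ≤ M := by
      have hKtop : M.subgroupOf B = ⊤ := by
        rw [← Subgroup.index_eq_one]
        by_contra hne
        obtain ⟨q, hq, hqd⟩ := Nat.exists_prime_and_dvd hne
        have hqcard : q ∣ Nat.card B := hqd.trans (Subgroup.index_dvd_card _)
        obtain ⟨P, hP⟩ := hBprop M le_rfl hnormal q hq hqcard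
        have hle : (P : Subgroup B) ≤ M.subgroupOf B :=
          Subgroup.map_le_iff_le_comap.mp (hcon q hq P hP)
        haveI := Fact.mk hq
        exact (Sylow.not_dvd_index P) (hqd.trans (Subgroup.index_dvd_of_le hle))
      exact Subgroup.subgroupOf_eq_top.mp hKtop
    refine hM.1 (top_le_iff.mp fun g _ => ?_)
    have hg : g ∈ (M : Set G) * (B : Set G) := by rw [hBuniv]; exact Set.mem_univ g
    obtain ⟨m, hm, b, hb, rfl⟩ := hg
    exact M.mul_mem hm (hBle hb)
  obtain ⟨q, hq, P, hperm, hnle⟩ := key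
  set N : Subgroup G := (P : Subgroup B).map B.subtype with hN
  have hsup : M ⊔ N = ⊤ := hM.2 _ (left_lt_sup.mpr hnle)
  have hMN : (M : Set G) * (N : Set G) = Set.univ := by
    rw [← sup_coe_of_mul_comm M N hperm, hsup, Subgroup.coe_top]
  have hNM : (N : Set G) * (M : Set G) = Set.univ := by rw [← hperm]; exact hMN
  have hdvd : M.index ∣ Nat.card N := index_dvd_card_of_cover N M hNM
  haveI := Fact.mk hq
  obtain ⟨k, hk⟩ := IsPGroup.iff_card.mp (P.2.map B.subtype)
  rw [hk] at hdvd
  obtain ⟨j, _, hj⟩ := (Nat.dvd_prime_pow hq).mp hdvd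
  exact ⟨q, j, hq, hj⟩
end

section
/- Let G be a finite group, p a prime, P a Sylow p-subgroup of G that is NS-supplemented in G with supplement B. Then for every prime q ∈ π(B) \ {p}, G has a Hall {p,q}-subgroup, namely PQ for some Sylow q-subgroup Q of B, and hence G has a Hall {p,r}-subgroup for every prime r dividing |G|. -/
open Subgroup Pointwise

/-- A Hall `{p,q}`-subgroup: its order is a `{p,q}`-number and its index is a
`{p,q}'`-number. -/
def IsHallPQSubgroup {G : Type*} [Group G] (p q : ℕ) (H : Subgroup G) : Prop :=
  (∀ r : ℕ, r.Prime → r ∣ Nat.card H → r = p ∨ r = q) ∧ ¬ p ∣ H.index ∧ ¬ q ∣ H.index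

/-- If `↑H * ↑K = ↑K * ↑H` then the set product is (the carrier of) a subgroup. -/
def mulSubgroup {G : Type*} [Group G] (H K : Subgroup G)
    (hc : (H : Set G) * (K : Set G) = (K : Set G) * (H : Set G)) : Subgroup G where
  carrier := (H : Set G) * (K : Set G)
  one_mem' := ⟨1, H.one_mem, 1, K.one_mem, mul_one 1⟩
  mul_mem' := by
    rintro a b ⟨h1, hh1, k1, hk1, rfl⟩ ⟨h2, hh2, k2, hk2, rfl⟩
    have hm : k1 * h2 ∈ (K : Set G) * (H : Set G) := ⟨k1, hk1, h2, hh2, rfl⟩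
    rw [← hc] at hm
    obtain ⟨h3, hh3, k3, hk3, he⟩ := hm
    have he' : h3 * k3 = k1 * h2 := he
    refine ⟨h1 * h3, mul_mem hh1 hh3, k3 * k2, mul_mem hk3 hk2, ?_⟩
    show h1 * h3 * (k3 * k2) = h1 * k1 * (h2 * k2)
    rw [show h1 * h3 * (k3 * k2) = h1 * (h3 * k3) * k2 by group, he']; group
  inv_mem' := by
    rintro a ⟨h, hh, k, hk, rfl⟩
    have hm : (k⁻¹ : G) * h⁻¹ ∈ (K : Set G) * (H : Set G) :=
      ⟨k⁻¹, inv_mem hk, h⁻¹, inv_mem hh, rfl⟩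
    rw [← hc] at hm
    simpa [mul_inv_rev] using hm

lemma mulSubgroup_coe {G : Type*} [Group G] (H K : Subgroup G)
    (hc : (H : Set G) * (K : Set G) = (K : Set G) * (H : Set G)) :
    ((mulSubgroup H K hc : Subgroup G) : Set G) = (H : Set G) * (K : Set G) := rfl

lemma card_mulSubgroup {G : Type*} [Group G] (H K : Subgroup G)
    (hc : (H : Set G) * (K : Set G) = (K : Set G) * (H : Set G))
    (hd : H ⊓ K = ⊥) :
    Nat.card (mulSubgroup H K hc) = Nat.card H * Nat.card K := by
  have e : (H × K) ≃ (mulSubgroup H K hc) := by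
    refine Equiv.ofBijective (fun x => ⟨(x.1 : G) * (x.2 : G), x.1, x.1.2, x.2, x.2.2, rfl⟩) ⟨?_, ?_⟩
    · rintro ⟨x1, y1⟩ ⟨x2, y2⟩ hxy
      simp only [Subtype.mk_eq_mk] at hxy
      replace hxy : (x1 : G) * y1 = x2 * y2 := congrArg Subtype.val hxy
      have h' : (x2 : G)⁻¹ * (x1 : G) = (y2 : G) * (y1 : G)⁻¹ := by
        have h0 : (x2 : G)⁻¹ * ((x1 : G) * y1) * (y1 : G)⁻¹ = (x2 : G)⁻¹ * x1 := by group
        rw [← h0, hxy]; group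
      have hmem : (x2 : G)⁻¹ * (x1 : G) ∈ H ⊓ K := by
        rw [Subgroup.mem_inf]
        refine ⟨mul_mem (inv_mem x2.2) x1.2, ?_⟩
        rw [h']
        exact mul_mem y2.2 (inv_mem y1.2)
      rw [hd, Subgroup.mem_bot] at hmem
      have hx : (x1 : G) = x2 := by
        have := hmem
        rw [inv_mul_eq_one] at this
        exact this.symm
      have hy : (y1 : G) = y2 := by
        have h1 : (x1 : G) * y1 = x1 * y2 := by rw [hxy, hx]
        exact mul_left_cancel h1
      exact Prod.ext (Subtype.ext hx) (Subtype.ext hy)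
    · rintro ⟨a, ha⟩
      obtain ⟨x, hx, y, hy, rfl⟩ := ha
      exact ⟨(⟨x, hx⟩, ⟨y, hy⟩), rfl⟩
  rw [← Nat.card_congr e, Nat.card_prod]

/-- If `G = P * B` as sets then `B.index ∣ Nat.card P`. -/
lemma index_dvd_of_mul_eq_univ {G : Type*} [Group G] [Finite G] (P B : Subgroup G)
    (hPB : (P : Set G) * (B : Set G) = Set.univ) : B.index ∣ Nat.card P := by
  have key : B.index = (B.subgroupOf P).index := by
    have e : (↥P ⧸ B.subgroupOf P) ≃ G ⧸ B := by
      refine Equiv.ofBijective (Quotient.map' Subtype.val ?_) ⟨?_, ?_⟩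
      · intro a b hab
        rw [QuotientGroup.leftRel_apply] at hab ⊢
        simpa [Subgroup.mem_subgroupOf] using hab
      · intro x y
        induction x using Quotient.inductionOn' with | h a =>
        induction y using Quotient.inductionOn' with | h b =>
        intro hab
        rw [Quotient.map'_mk'', Quotient.map'_mk''] at hab
        have h1 : ((a : G) : G ⧸ B) = ((b : G) : G ⧸ B) := hab
        rw [QuotientGroup.eq] at h1
        apply Quotient.sound'
        rw [QuotientGroup.leftRel_apply]
        simpa [Subgroup.mem_subgroupOf] using h1
      · intro x
        induction x using Quotient.inductionOn' with | h g =>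
        have hg : g ∈ (P : Set G) * (B : Set G) := hPB ▸ Set.mem_univ g
        obtain ⟨x, hx, y, hy, rfl⟩ := hg
        refine ⟨Quotient.mk'' (⟨x, hx⟩ : P), ?_⟩
        rw [Quotient.map'_mk'']
        have : ((x : G) : G ⧸ B) = ((x * y : G) : G ⧸ B) := by
          rw [QuotientGroup.eq]; simpa using hy
        exact this
    unfold Subgroup.index
    exact (Nat.card_congr e).symm
  rw [key]
  exact Subgroup.index_dvd_card _


lemma stmt10_aux {G : Type*} [Group G] [Finite G] (p : ℕ) (hp : p.Prime)
    (P : Sylow p G) (B : Subgroup G) (h : IsNSSupplementOf (P : Subgroup G) B)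
    (q : ℕ) (hq : q.Prime) (hqB : q ∣ Nat.card B) (hqp : q ≠ p) :
    ∃ Q : Sylow q B, ∃ H : Subgroup G,
      (H : Set G) = ((P : Subgroup G) : Set G) *
        (((Q : Subgroup B).map B.subtype : Subgroup G) : Set G) ∧
      IsHallPQSubgroup p q H := by
  haveI := Fact.mk hp
  haveI := Fact.mk hq
  have hnorm : ((P : Subgroup G).subgroupOf (P : Subgroup G)).Normal := by
    rw [Subgroup.subgroupOf_self]; infer_instance
  obtain ⟨Bq, hcomm⟩ := h.2 (P : Subgroup G) le_rfl hnorm q hq hqB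
  set Qg : Subgroup G := (Bq : Subgroup B).map B.subtype with hQdef
  set S := mulSubgroup (P : Subgroup G) Qg hcomm with hSdef
  obtain ⟨a, hPa⟩ := (IsPGroup.iff_card).mp P.2
  have hQpgrp : IsPGroup q Qg := Bq.2.map B.subtype
  obtain ⟨b, hQb⟩ := (IsPGroup.iff_card).mp hQpgrp
  have hdisj : (P : Subgroup G) ⊓ Qg = ⊥ := by
    refine inf_eq_bot_of_coprime ?_
    rw [hPa, hQb]
    exact Nat.Coprime.pow _ _ ((Nat.coprime_primes hp hq).mpr (Ne.symm hqp))
  have hcard : Nat.card S = Nat.card (P : Subgroup G) * Nat.card Qg :=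
    card_mulSubgroup _ _ hcomm hdisj
  have hPS : (P : Subgroup G) ≤ S := fun x hx => ⟨x, hx, 1, Qg.one_mem, mul_one x⟩
  have hQS : Qg ≤ S := fun x hx => ⟨1, (P : Subgroup G).one_mem, x, hx, one_mul x⟩
  have hpS : ¬ p ∣ S.index := by
    intro hd
    exact P.not_dvd_index (hd.trans (Subgroup.index_dvd_of_le hPS))
  have hBindex : B.index ∣ Nat.card (P : Subgroup G) := index_dvd_of_mul_eq_univ _ _ h.1
  have hqBindex : ¬ q ∣ B.index := by
    intro hd
    have h1 : q ∣ p ^ a := hPa ▸ hd.trans hBindex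
    exact hqp ((Nat.prime_dvd_prime_iff_eq hq hp).mp (hq.dvd_of_dvd_pow h1))
  have hQcard : Nat.card Qg = q ^ (Nat.card B).factorization q := by
    have h1 : Nat.card Qg = Nat.card Bq :=
      Nat.card_congr (Subgroup.equivMapOfInjective (Bq : Subgroup B) B.subtype
        B.subtype_injective).toEquiv.symm
    rw [h1]
    exact Bq.card_eq_multiplicity
  have hqS : ¬ q ∣ S.index := by
    intro hd
    have hGS : S.index * Nat.card S = Nat.card G := S.index_mul_card
    have hGB : B.index * Nat.card B = Nat.card G := B.index_mul_card
    have hSi : S.index ≠ 0 := Subgroup.index_ne_zero_of_finite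
    have hBi : B.index ≠ 0 := Subgroup.index_ne_zero_of_finite
    have hBc : Nat.card B ≠ 0 := Nat.card_pos.ne'
    have hPc : Nat.card (P : Subgroup G) ≠ 0 := Nat.card_pos.ne'
    have hQc : Nat.card Qg ≠ 0 := Nat.card_pos.ne'
    have hv : (S.index * Nat.card S).factorization q
        = (B.index * Nat.card B).factorization q := by rw [hGS, hGB]
    rw [hcard, Nat.factorization_mul hSi (mul_ne_zero hPc hQc),
      Nat.factorization_mul hPc hQc, Nat.factorization_mul hBi hBc] at hv
    simp only [Finsupp.coe_add, Pi.add_apply] at hv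
    have hvP : (Nat.card (P : Subgroup G)).factorization q = 0 := by
      apply Nat.factorization_eq_zero_of_not_dvd
      intro hqP
      rw [hPa] at hqP
      exact hqp ((Nat.prime_dvd_prime_iff_eq hq hp).mp (hq.dvd_of_dvd_pow hqP))
    have hvBi : (B.index).factorization q = 0 :=
      Nat.factorization_eq_zero_of_not_dvd hqBindex
    have hvQ : (Nat.card Qg).factorization q = (Nat.card B).factorization q := by
      rw [hQcard, hq.factorization_pow, Finsupp.single_eq_same]
    rw [hvP, hvBi, hvQ] at hv
    have hpos := hq.factorization_pos_of_dvd hSi hd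
    omega
  refine ⟨Bq, S, rfl, ?_, hpS, hqS⟩
  intro r hr hrS
  rw [hcard, hPa, hQb] at hrS
  rcases (Nat.Prime.dvd_mul hr).mp hrS with h1 | h2
  · exact Or.inl ((Nat.prime_dvd_prime_iff_eq hr hp).mp (hr.dvd_of_dvd_pow h1))
  · exact Or.inr ((Nat.prime_dvd_prime_iff_eq hr hq).mp (hr.dvd_of_dvd_pow h2))

/-- If a Sylow `p`-subgroup `P` of `G` is NS-supplemented with supplement
`B`, then for every prime `q ≠ p` dividing `|B|`, `G` has a Hall `{p,q}`-subgroup `PQ`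
for some Sylow `q`-subgroup `Q` of `B`; hence `G` has a Hall `{p,r}`-subgroup for every
prime `r` dividing `|G|`. -/
theorem stmt10 {G : Type*} [Group G] [Finite G] (p : ℕ) (hp : p.Prime)
    (P : Sylow p G) (B : Subgroup G) (h : IsNSSupplementOf (P : Subgroup G) B) :
    (∀ q : ℕ, q.Prime → q ∣ Nat.card B → q ≠ p →
      ∃ Q : Sylow q B, ∃ H : Subgroup G,
        (H : Set G) = ((P : Subgroup G) : Set G) *
          (((Q : Subgroup B).map B.subtype : Subgroup G) : Set G) ∧
        IsHallPQSubgroup p q H) ∧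
    ∀ r : ℕ, r.Prime → r ∣ Nat.card G →
      ∃ H : Subgroup G, IsHallPQSubgroup p r H := by
  
  refine ⟨fun q hq hqB hqp => stmt10_aux p hp P B h q hq hqB hqp, ?_⟩
  intro r hr hrG
  haveI := Fact.mk hp
  by_cases hrp : r = p
  · subst hrp
    refine ⟨(P : Subgroup G), ?_, ?_, ?_⟩
    · intro s hs hsP
      obtain ⟨a, hPa⟩ := (IsPGroup.iff_card).mp P.2
      rw [hPa] at hsP
      exact Or.inl ((Nat.prime_dvd_prime_iff_eq hs hp).mp (hs.dvd_of_dvd_pow hsP))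
    · exact P.not_dvd_index
    · exact P.not_dvd_index
  · have hrB : r ∣ Nat.card B := by
      obtain ⟨a, hPa⟩ := (IsPGroup.iff_card).mp P.2
      have hBindex : B.index ∣ Nat.card (P : Subgroup G) :=
        index_dvd_of_mul_eq_univ _ _ h.1
      have hGB : B.index * Nat.card B = Nat.card G := B.index_mul_card
      rcases (Nat.Prime.dvd_mul hr).mp (hGB ▸ hrG) with h1 | h2
      · exact absurd ((Nat.prime_dvd_prime_iff_eq hr hp).mp
          (hr.dvd_of_dvd_pow (hPa ▸ h1.trans hBindex))) hrp
      · exact h2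
    obtain ⟨Q, H, _, hH⟩ := stmt10_aux p hp P B h r hr hrB hrp
    exact ⟨H, hH⟩
end

section
/- Let G be a finite p-soluble group with O_{p'}(G) = 1, P a Sylow p-subgroup of G that is NS-supplemented in G with supplement B, and let N = O_p(G) ≠ 1. Choose a subgroup X ≤ N ∩ Z(P) with |X| = p. Then for every prime r ≠ p dividing |B| there exists a Sylow r-subgroup R of B such that XR = RX is a subgroup and N ∩ XR = X, so X is normalized by R. -/
open Subgroup Pointwise

/-- Let `G` be `p`-soluble with `O_{p'}(G) = 1`, `P` a Sylow `p`-subgroup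
NS-supplemented with supplement `B`, `N = O_p(G) ≠ 1`, and `X ≤ N ∩ Z(P)` with `|X| = p`.
Then for every prime `r ≠ p` dividing `|B|` there is a Sylow `r`-subgroup `R` of `B` with
`XR = RX`, `N ∩ XR = X`, and `R` normalizes `X`. -/
theorem stmt11 {G : Type*} [Group G] [Finite G] (p : ℕ) (hp : p.Prime)
    (hsol : IsPSolvableGroup p G)
    (hOp' : ∀ K : Subgroup G, K.Normal → ¬ p ∣ Nat.card K → K = ⊥)
    (P : Sylow p G) (B : Subgroup G) (h : IsNSSupplementOf (P : Subgroup G) B)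
    (N : Subgroup G) (hN : N.Normal) (hNp : IsPGroup p N)
    (hNmax : ∀ M : Subgroup G, M.Normal → IsPGroup p M → M ≤ N) (hNne : N ≠ ⊥)
    (X : Subgroup G) (hXN : X ≤ N) (hXP : X ≤ (P : Subgroup G))
    (hXZ : ∀ x ∈ X, ∀ y ∈ (P : Subgroup G), x * y = y * x)
    (hXcard : Nat.card X = p) :
    ∀ r : ℕ, r.Prime → r ≠ p → r ∣ Nat.card B →
      ∃ R : Sylow r B,
        (X : Set G) * (((R : Subgroup B).map B.subtype : Subgroup G) : Set G) =
          (((R : Subgroup B).map B.subtype : Subgroup G) : Set G) * (X : Set G) ∧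
        (N : Set G) ∩ ((X : Set G) *
          (((R : Subgroup B).map B.subtype : Subgroup G) : Set G)) = (X : Set G) ∧
        ((R : Subgroup B).map B.subtype : Subgroup G) ≤ Subgroup.normalizer (X : Set G) := by
  intro r hr hrp hrB
  -- X.subgroupOf P is normal in P since X is central in P
  have hnorm : (X.subgroupOf (P : Subgroup G)).Normal := by
    constructor
    intro n hn g
    have hc := hXZ (n : G) hn (g : G) g.2
    have : (g * n * g⁻¹ : ↥(P : Subgroup G)) = n := by
      ext
      push_cast
      rw [← hc]
      group
    rw [Subgroup.mem_subgroupOf] at hn ⊢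
    simpa [this] using hn
  obtain ⟨R, hcomm⟩ := h.2 X hXP hnorm r hr hrB
  set R' : Subgroup G := (R : Subgroup B).map B.subtype with hR'
  refine ⟨R, hcomm, ?_⟩
  -- any element of N ∩ R' is trivial
  have hR'p : IsPGroup r R' := R.isPGroup'.map B.subtype
  have htriv : ∀ s : G, s ∈ N → s ∈ R' → s = 1 := by
    intro s hsN hsR
    obtain ⟨a, ha⟩ := hNp ⟨s, hsN⟩
    obtain ⟨b, hb⟩ := hR'p ⟨s, hsR⟩
    have ha' : s ^ p ^ a = 1 := by
      have := congrArg (Subgroup.subtype N) ha; simpa using this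
    have hb' : s ^ r ^ b = 1 := by
      have := congrArg (Subgroup.subtype R') hb; simpa using this
    have h1 : orderOf s ∣ p ^ a := orderOf_dvd_of_pow_eq_one ha'
    have h2 : orderOf s ∣ r ^ b := orderOf_dvd_of_pow_eq_one hb'
    have hcop : Nat.Coprime (p ^ a) (r ^ b) :=
      Nat.Coprime.pow a b ((Nat.coprime_primes hp hr).mpr (Ne.symm hrp))
    have hdvd : orderOf s ∣ Nat.gcd (p ^ a) (r ^ b) := Nat.dvd_gcd h1 h2
    rw [hcop] at hdvd
    exact orderOf_eq_one_iff.mp (Nat.dvd_one.mp hdvd)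
  -- N ∩ X*R' = X
  have hinter : (N : Set G) ∩ ((X : Set G) * (R' : Set G)) = (X : Set G) := by
    apply Set.Subset.antisymm
    · rintro g ⟨hgN, x, hx, s, hs, rfl⟩
      have hsN : s ∈ N := by
        have : s = x⁻¹ * (x * s) := by group
        rw [this]
        exact N.mul_mem (N.inv_mem (hXN hx)) hgN
      have : s = 1 := htriv s hsN hs
      simpa [this] using hx
    · intro x hx
      exact ⟨hXN hx, x, hx, 1, R'.one_mem, mul_one x⟩
  refine ⟨hinter, ?_⟩
  -- conjugation by elements of R' preserves X
  have hconj : ∀ g ∈ R', ∀ x ∈ X, g * x * g⁻¹ ∈ X := by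
    intro g hg x hx
    have h1 : g * x * g⁻¹ ∈ (N : Set G) := hN.conj_mem x (hXN hx) g
    have h2 : g * x ∈ (X : Set G) * (R' : Set G) := by
      rw [hcomm]
      exact ⟨g, hg, x, hx, rfl⟩
    obtain ⟨x', hx', s', hs', heq⟩ := h2
    have h3 : g * x * g⁻¹ ∈ (X : Set G) * (R' : Set G) :=
      ⟨x', hx', s' * g⁻¹, R'.mul_mem hs' (R'.inv_mem hg), by
        dsimp only at heq ⊢; rw [← mul_assoc, heq]⟩
    have : g * x * g⁻¹ ∈ (N : Set G) ∩ ((X : Set G) * (R' : Set G)) := ⟨h1, h3⟩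
    rw [hinter] at this
    exact this
  intro g hg
  rw [Subgroup.mem_normalizer_iff]
  intro x
  constructor
  · exact fun hx => hconj g hg x hx
  · intro hx
    have := hconj g⁻¹ (R'.inv_mem hg) _ hx
    simpa [mul_assoc] using this
end

section
/- The group G of order 72 given by the presentation ⟨a, b, c | a^3 = b^3 = c^8 = 1, ab = ba, a^c = b, b^c = ab⟩ (SmallGroup(72,39)) has a maximal subgroup M_1 = [⟨a⟩ × ⟨b⟩]⟨c^2⟩ of order 36 that is not supersoluble, while G itself has all maximal subgroups NS-supplemented; in particular, a group all of whose maximal subgroups are NS-supplemented need not be supersoluble. -/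
open Subgroup Pointwise

/-- Relators of the presentation `⟨a,b,c ∣ a³ = b³ = c⁸ = 1, ab = ba, aᶜ = b, bᶜ = ab⟩`
of SmallGroup(72,39), with generators `0 ↦ a`, `1 ↦ b`, `2 ↦ c`. -/
def rels72 : Set (FreeGroup (Fin 3)) :=
  { (FreeGroup.of 0) ^ 3, (FreeGroup.of 1) ^ 3, (FreeGroup.of 2) ^ 8,
    FreeGroup.of 0 * FreeGroup.of 1 * (FreeGroup.of 0)⁻¹ * (FreeGroup.of 1)⁻¹,
    (FreeGroup.of 2)⁻¹ * FreeGroup.of 0 * FreeGroup.of 2 * (FreeGroup.of 1)⁻¹,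
    (FreeGroup.of 2)⁻¹ * FreeGroup.of 1 * FreeGroup.of 2 *
      (FreeGroup.of 0 * FreeGroup.of 1)⁻¹ }

/-- The group `G = ⟨a,b,c ∣ a³ = b³ = c⁸ = 1, ab = ba, aᶜ = b, bᶜ = ab⟩`,
i.e. SmallGroup(72,39). -/
def G72 := PresentedGroup rels72

instance : Group G72 := by unfold G72; infer_instance

/-- The maximal subgroup `M₁ = [⟨a⟩ × ⟨b⟩]⟨c²⟩` of `G72`. -/
def M72 : Subgroup G72 :=
  Subgroup.closure { PresentedGroup.of 0, PresentedGroup.of 1,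
    (PresentedGroup.of 2 : PresentedGroup rels72) ^ 2 }

/-! ### Auxiliary: the concrete model `K = (ZMod 3 × ZMod 3) ⋊ ZMod 8` -/

abbrev V3 := Multiplicative (ZMod 3 × ZMod 3)
abbrev H8 := Multiplicative (ZMod 8)

def madd : (ZMod 3 × ZMod 3) ≃+ (ZMod 3 × ZMod 3) where
  toFun p := (2*p.1+p.2, p.1)
  invFun p := (p.2, p.1+p.2)
  left_inv := by decide
  right_inv := by decide
  map_add' := by decide

def mV : V3 ≃* V3 := AddEquiv.toMultiplicative madd

lemma mV_pow_apply (k : ℕ) (v : V3) : (mV ^ k : MulAut V3) v = (mV : V3 → V3)^[k] v := by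
  have := hom_coe_pow (fun (e : MulAut V3) => (e : V3 → V3)) rfl (fun _ _ => rfl) mV k
  exact congrFun this v

lemma mV8 : mV ^ 8 = (1 : MulAut V3) := by
  refine MulEquiv.ext fun v => ?_
  rw [mV_pow_apply]
  revert v; decide

lemma pow_mod_eq {Γ : Type*} [Monoid Γ] {g : Γ} {n : ℕ} (hg : g ^ n = 1) (k : ℕ) :
    g ^ (k % n) = g ^ k := by
  conv_rhs => rw [← Nat.mod_add_div k n, pow_add, pow_mul, hg, one_pow, mul_one]

/-- homomorphism from `Multiplicative (ZMod n)` determined by an element whose `n`-th power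
is trivial. -/
def zmodHom {Γ : Type*} [Group Γ] {n : ℕ} [NeZero n] (g : Γ) (hg : g ^ n = 1) :
    Multiplicative (ZMod n) →* Γ where
  toFun k := g ^ (Multiplicative.toAdd k).val
  map_one' := by
    show g ^ (0 : ZMod n).val = 1
    rw [ZMod.val_zero, pow_zero]
  map_mul' x y := by
    show g ^ ((Multiplicative.toAdd x) + (Multiplicative.toAdd y)).val = _
    rw [ZMod.val_add, pow_mod_eq hg, pow_add]

lemma zmodHom_apply {Γ : Type*} [Group Γ] {n : ℕ} [NeZero n] (g : Γ) (hg : g ^ n = 1)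
    (k : Multiplicative (ZMod n)) : zmodHom g hg k = g ^ (Multiplicative.toAdd k).val := rfl

def φK : H8 →* MulAut V3 := zmodHom mV mV8

abbrev K := SemidirectProduct V3 H8 φK

namespace KModel

open SemidirectProduct

def aK : K := inl (Multiplicative.ofAdd (1,0))
def bK : K := inl (Multiplicative.ofAdd (0,1))
def cK : K := inr (Multiplicative.ofAdd 1)
def γK : K := cK ^ 2

instance : DecidableEq K := fun x y =>
  decidable_of_iff (x.left = y.left ∧ x.right = y.right)
    (by constructor
        · rintro ⟨h1, h2⟩; exact SemidirectProduct.ext h1 h2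
        · rintro rfl; exact ⟨rfl, rfl⟩)

def kEquiv : K ≃ V3 × H8 where
  toFun x := (x.left, x.right)
  invFun p := ⟨p.1, p.2⟩
  left_inv _ := rfl
  right_inv _ := rfl

instance : Fintype K := Fintype.ofEquiv _ kEquiv.symm

/-! ### The two key subgroups of `K` -/

def V' : Subgroup K := (rightHom : K →* H8).ker

def θ2 : K →* Multiplicative (ZMod 2) :=
  (AddMonoidHom.toMultiplicative
    ((ZMod.castHom (by norm_num : (2:ℕ) ∣ 8) (ZMod 2)).toAddMonoidHom)).comp
    (rightHom : K →* H8)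

def M' : Subgroup K := θ2.ker

instance : DecidablePred (· ∈ V') := fun x =>
  decidable_of_iff ((rightHom : K →* H8) x = 1) MonoidHom.mem_ker.symm

instance : DecidablePred (· ∈ M') := fun x =>
  decidable_of_iff (θ2 x = 1) MonoidHom.mem_ker.symm

end KModel

section Sanity
open KModel
example : aK ^ 3 = 1 := by decide
example : cK ^ 8 = 1 := by decide
example : cK⁻¹ * aK * cK = bK := by decide
example : γK ∈ M' := by decide
example : Fintype.card K = 72 := by decide
end Sanity

/-! ### Generators of `G72` and relations -/

namespace GModel

open KModel SemidirectProduct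

def aG : G72 := PresentedGroup.of 0
def bG : G72 := PresentedGroup.of 1
def cG : G72 := PresentedGroup.of 2

lemma mk_rel {r : FreeGroup (Fin 3)} (hr : r ∈ rels72) :
    PresentedGroup.mk rels72 r = 1 :=
  (QuotientGroup.eq_one_iff _).mpr (Subgroup.subset_normalClosure hr)

lemma mem1 : (FreeGroup.of 0 : FreeGroup (Fin 3)) ^ 3 ∈ rels72 := by unfold rels72; simp
lemma mem2 : (FreeGroup.of 1 : FreeGroup (Fin 3)) ^ 3 ∈ rels72 := by unfold rels72; simp
lemma mem3 : (FreeGroup.of 2 : FreeGroup (Fin 3)) ^ 8 ∈ rels72 := by unfold rels72; simp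
lemma mem4 : (FreeGroup.of 0 * FreeGroup.of 1 * (FreeGroup.of 0)⁻¹ * (FreeGroup.of 1)⁻¹ :
    FreeGroup (Fin 3)) ∈ rels72 := by unfold rels72; simp
lemma mem5 : ((FreeGroup.of 2)⁻¹ * FreeGroup.of 0 * FreeGroup.of 2 * (FreeGroup.of 1)⁻¹ :
    FreeGroup (Fin 3)) ∈ rels72 := by unfold rels72; simp
lemma mem6 : ((FreeGroup.of 2)⁻¹ * FreeGroup.of 1 * FreeGroup.of 2 *
    (FreeGroup.of 0 * FreeGroup.of 1)⁻¹ : FreeGroup (Fin 3)) ∈ rels72 := by unfold rels72; simp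

lemma aG3 : aG ^ 3 = 1 := by
  have := mk_rel mem1; rwa [map_pow] at this

lemma bG3 : bG ^ 3 = 1 := by
  have := mk_rel mem2; rwa [map_pow] at this

lemma cG8 : cG ^ 8 = 1 := by
  have := mk_rel mem3; rwa [map_pow] at this

lemma abComm : aG * bG = bG * aG := by
  have := mk_rel mem4
  rw [map_mul, map_mul, map_mul, map_inv, map_inv] at this
  exact commutatorElement_eq_one_iff_mul_comm.mp this

lemma rel5 : cG⁻¹ * aG * cG = bG := by
  have := mk_rel mem5
  rw [map_mul, map_mul, map_mul, map_inv, map_inv] at this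
  exact mul_inv_eq_one.mp this

lemma rel6 : cG⁻¹ * bG * cG = aG * bG := by
  have := mk_rel mem6
  rw [map_mul, map_mul, map_mul, map_inv, map_inv, map_mul] at this
  exact mul_inv_eq_one.mp this

lemma c_b_c : cG * bG * cG⁻¹ = aG := by
  rw [← rel5]; group

lemma c_a_c : cG * aG * cG⁻¹ = aG ^ 2 * bG := by
  have h1 : cG * (aG * bG) * cG⁻¹ = bG := by
    rw [← rel6]; group
  have h2 : (cG * aG * cG⁻¹) * (cG * bG * cG⁻¹) = bG := by
    rw [show (cG * aG * cG⁻¹) * (cG * bG * cG⁻¹) = cG * (aG * bG) * cG⁻¹ by group, h1]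
  rw [c_b_c] at h2
  have h3 : cG * aG * cG⁻¹ = bG * aG⁻¹ := by
    rw [← h2]; group
  have h4 : aG⁻¹ = aG ^ 2 := by
    rw [inv_eq_iff_mul_eq_one, ← pow_succ']
    exact aG3
  rw [h3, h4]
  have h5 : Commute aG bG := abComm
  exact ((h5.pow_left 2).symm).eq

/-! ### The homomorphism `Φ : G72 →* K` -/

def fgen : Fin 3 → K := ![aK, bK, cK]

lemma hrels : ∀ r ∈ rels72, FreeGroup.lift fgen r = 1 := by
  intro r hr
  rcases hr with rfl | rfl | rfl | rfl | rfl | rfl <;>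
    simp only [map_pow, map_mul, map_inv, FreeGroup.lift_apply_of, fgen] <;> decide

def Φ : G72 →* K := PresentedGroup.toGroup hrels

lemma Φa : Φ aG = aK := PresentedGroup.toGroup.of hrels
lemma Φb : Φ bG = bK := PresentedGroup.toGroup.of hrels
lemma Φc : Φ cG = cK := PresentedGroup.toGroup.of hrels

/-! ### The homomorphism `Ψ : K →* G72` -/

def fH : H8 →* G72 := zmodHom cG cG8

def fV : V3 →* G72 where
  toFun v := aG ^ ((Multiplicative.toAdd v).1.val) * bG ^ ((Multiplicative.toAdd v).2.val)
  map_one' := by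
    show aG ^ (0 : ZMod 3).val * bG ^ (0 : ZMod 3).val = 1
    rw [ZMod.val_zero, pow_zero, pow_zero, one_mul]
  map_mul' x y := by
    have hc : Commute ((aG : G72) ^ (Multiplicative.toAdd y).1.val)
        (bG ^ (Multiplicative.toAdd x).2.val) := Commute.pow_pow abComm _ _
    show aG ^ ((Multiplicative.toAdd x).1 + (Multiplicative.toAdd y).1).val *
        bG ^ ((Multiplicative.toAdd x).2 + (Multiplicative.toAdd y).2).val =
        (aG ^ (Multiplicative.toAdd x).1.val * bG ^ (Multiplicative.toAdd x).2.val) *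
        (aG ^ (Multiplicative.toAdd y).1.val * bG ^ (Multiplicative.toAdd y).2.val)
    rw [ZMod.val_add, ZMod.val_add, pow_mod_eq aG3, pow_mod_eq bG3, pow_add, pow_add,
      hc.mul_mul_mul_comm]

lemma fV_apply (v : V3) :
    fV v = aG ^ ((Multiplicative.toAdd v).1.val) * bG ^ ((Multiplicative.toAdd v).2.val) := rfl

def e1 : V3 := Multiplicative.ofAdd (1,0)
def e2 : V3 := Multiplicative.ofAdd (0,1)
def g1 : H8 := Multiplicative.ofAdd 1

lemma V3gen : ∀ v : V3,
    e1 ^ ((Multiplicative.toAdd v).1.val) * e2 ^ ((Multiplicative.toAdd v).2.val) = v := by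
  decide

lemma H8gen : ∀ h : H8, g1 ^ ((Multiplicative.toAdd h).val) = h := by decide

lemma homV3_ext {Γ : Type*} [Monoid Γ] {f g : V3 →* Γ} (h1 : f e1 = g e1)
    (h2 : f e2 = g e2) : f = g := by
  refine MonoidHom.ext fun v => ?_
  conv_lhs => rw [← V3gen v]
  conv_rhs => rw [← V3gen v]
  rw [map_mul, map_mul, map_pow, map_pow, map_pow, map_pow, h1, h2]

lemma homH8_ext {Γ : Type*} [Monoid Γ] {f g : H8 →* Γ} (h1 : f g1 = g g1) : f = g := by
  refine MonoidHom.ext fun h => ?_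
  conv_lhs => rw [← H8gen h]
  conv_rhs => rw [← H8gen h]
  rw [map_pow, map_pow, h1]

lemma fV_e1 : fV e1 = aG := by
  rw [fV_apply]
  show aG ^ (1:ZMod 3).val * bG ^ (0:ZMod 3).val = aG
  rw [ZMod.val_zero, pow_zero, mul_one, show (1:ZMod 3).val = 1 from rfl, pow_one]

lemma fV_e2 : fV e2 = bG := by
  rw [fV_apply]
  show aG ^ (0:ZMod 3).val * bG ^ (1:ZMod 3).val = bG
  rw [ZMod.val_zero, pow_zero, one_mul, show (1:ZMod 3).val = 1 from rfl, pow_one]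

lemma fH_g1 : fH g1 = cG := by
  rw [show fH g1 = cG ^ (1 : ZMod 8).val from rfl, show (1:ZMod 8).val = 1 from rfl, pow_one]

lemma hcomp : ∀ h : H8,
    fV.comp (φK h).toMonoidHom = (MulAut.conj (fH h)).toMonoidHom.comp fV := by
  have Pg' : fV.comp (φK g1).toMonoidHom = (MulAut.conj (fH g1)).toMonoidHom.comp fV := by
    apply homV3_ext
    · show fV (φK g1 e1) = fH g1 * fV e1 * (fH g1)⁻¹
      have hφ1 : φK g1 e1 = Multiplicative.ofAdd ((2 : ZMod 3), (1 : ZMod 3)) := by decide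
      have hf1 : fV (Multiplicative.ofAdd ((2 : ZMod 3), (1 : ZMod 3))) = aG ^ 2 * bG := by
        rw [fV_apply]
        show aG ^ (2:ZMod 3).val * bG ^ (1:ZMod 3).val = aG ^ 2 * bG
        rw [show (1:ZMod 3).val = 1 from rfl, pow_one, show (2:ZMod 3).val = 2 from rfl]
      rw [hφ1, hf1, fV_e1, fH_g1, ← c_a_c]
    · show fV (φK g1 e2) = fH g1 * fV e2 * (fH g1)⁻¹
      have hφ2 : φK g1 e2 = e1 := by decide
      rw [hφ2, fV_e1, fV_e2, fH_g1, ← c_b_c]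
  set P : H8 → Prop :=
    fun h => ∀ v : V3, fV (φK h v) = fH h * fV v * (fH h)⁻¹ with hP
  have Pg : P g1 := by
    intro v
    have := DFunLike.congr_fun Pg' v
    simpa using this
  have P1 : P 1 := by
    intro v
    rw [map_one φK, map_one fH, MulAut.one_apply, inv_one, one_mul, mul_one]
  have Pmul : ∀ x y, P x → P y → P (x * y) := by
    intro x y hx hy v
    rw [map_mul φK, MulAut.mul_apply, hx, hy, map_mul fH, mul_inv_rev]
    group
  have Ppow : ∀ k : ℕ, P (g1 ^ k) := by
    intro k
    induction k with
    | zero => rw [pow_zero]; exact P1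
    | succ n ih => rw [pow_succ]; exact Pmul _ _ ih Pg
  intro h
  refine MonoidHom.ext fun v => ?_
  have := Ppow ((Multiplicative.toAdd h).val) v
  rw [H8gen] at this
  simpa [MulAut.conj_apply] using this

def Ψ : K →* G72 := SemidirectProduct.lift fV fH hcomp

lemma Ψa : Ψ aK = aG := by
  show SemidirectProduct.lift fV fH hcomp (inl e1) = aG
  rw [SemidirectProduct.lift_inl, fV_e1]

lemma Ψb : Ψ bK = bG := by
  show SemidirectProduct.lift fV fH hcomp (inl e2) = bG
  rw [SemidirectProduct.lift_inl, fV_e2]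

lemma Ψc : Ψ cK = cG := by
  show SemidirectProduct.lift fV fH hcomp (inr g1) = cG
  rw [SemidirectProduct.lift_inr, fH_g1]

lemma ΨΦ : Ψ.comp Φ = MonoidHom.id G72 := by
  apply PresentedGroup.ext
  intro x
  fin_cases x
  · show Ψ (Φ aG) = aG
    rw [Φa, Ψa]
  · show Ψ (Φ bG) = bG
    rw [Φb, Ψb]
  · show Ψ (Φ cG) = cG
    rw [Φc, Ψc]

lemma ΦΨ : Φ.comp Ψ = MonoidHom.id K := by
  refine SemidirectProduct.hom_ext ?_ ?_
  · apply homV3_ext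
    · show Φ (Ψ (inl e1)) = inl e1
      rw [show (inl e1 : K) = aK from rfl, Ψa, Φa]
    · show Φ (Ψ (inl e2)) = inl e2
      rw [show (inl e2 : K) = bK from rfl, Ψb, Φb]
  · apply homH8_ext
    show Φ (Ψ (inr g1)) = inr g1
    rw [show (inr g1 : K) = cK from rfl, Ψc, Φc]

def e72 : G72 ≃* K := MonoidHom.toMulEquiv Φ Ψ ΨΦ ΦΨ

lemma e72_coe : (e72 : G72 →* K) = Φ := rfl

end GModel

/-! ### Generic auxiliary lemmas -/

section Generic

variable {Γ : Type*} [Group Γ] {Δ : Type*} [Group Δ]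

lemma isSupersolvable_of_mulEquiv (e : Γ ≃* Δ) (h : IsSupersolvableGroup Γ) :
    IsSupersolvableGroup Δ := by
  obtain ⟨σ, hmono, h0, ⟨N, hN⟩, hnorm, hstep⟩ := h
  refine ⟨fun n => Subgroup.map (e : Γ →* Δ) (σ n), ?_, ?_, ⟨N, ?_⟩, ?_, ?_⟩
  · exact fun i j hij => Subgroup.map_mono (hmono hij)
  · show Subgroup.map (e : Γ →* Δ) (σ 0) = ⊥
    rw [h0, Subgroup.map_bot]
  · show Subgroup.map (e : Γ →* Δ) (σ N) = ⊤
    rw [hN, Subgroup.map_top_of_surjective _ e.surjective]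
  · exact fun n => Subgroup.Normal.map (hnorm n) _ e.surjective
  · intro n
    obtain ⟨g, hg⟩ := hstep n
    refine ⟨e g, ?_⟩
    show Subgroup.map (e : Γ →* Δ) (σ (n+1)) = Subgroup.map (e : Γ →* Δ) (σ n) ⊔ _
    rw [hg, Subgroup.map_sup, MonoidHom.map_zpowers]
    rfl

lemma exists_normal_zpowers [Nontrivial Γ] (h : IsSupersolvableGroup Γ) :
    ∃ g : Γ, g ≠ 1 ∧ (Subgroup.zpowers g).Normal := by
  obtain ⟨σ, hmono, h0, ⟨N, hN⟩, hnorm, hstep⟩ := h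
  classical
  have hex : ∃ n, σ n ≠ ⊥ := ⟨N, by rw [hN]; exact top_ne_bot⟩
  obtain ⟨k, hk⟩ : ∃ k, Nat.find hex = k + 1 := by
    refine Nat.exists_eq_succ_of_ne_zero ?_
    intro h0'
    exact (h0' ▸ Nat.find_spec hex) h0
  have hkbot : σ k = ⊥ := by
    by_contra hne
    have := Nat.find_min' hex hne
    omega
  obtain ⟨g, hg⟩ := hstep k
  have hσ : σ (k + 1) = Subgroup.zpowers g := by rw [hg, hkbot, bot_sup_eq]
  refine ⟨g, ?_, hσ ▸ hnorm (k + 1)⟩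
  rintro rfl
  rw [Subgroup.zpowers_one_eq_bot] at hσ
  exact (hk ▸ Nat.find_spec hex) hσ

lemma zpow_reduce {g y : Γ} {n : ℕ} (hn : 0 < n) (h1 : g ^ n = 1)
    (hy : y ∈ Subgroup.zpowers g) : ∃ k, k < n ∧ g ^ k = y := by
  obtain ⟨m, rfl⟩ := Subgroup.mem_zpowers_iff.mp hy
  refine ⟨(m % (n : ℤ)).toNat, ?_, ?_⟩
  · have h2 : (0:ℤ) < n := by exact_mod_cast hn
    have := Int.emod_lt_of_pos m h2
    omega
  · have h2 : (0:ℤ) ≤ m % (n : ℤ) := Int.emod_nonneg m (by positivity)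
    rw [← zpow_natCast, Int.toNat_of_nonneg h2]
    conv_rhs => rw [← Int.emod_add_mul_ediv m (n : ℤ)]
    rw [zpow_add, zpow_mul, zpow_natCast, h1, one_zpow, mul_one]

lemma normal_set_mul_comm {N : Subgroup Γ} (hN : N.Normal) (s : Set Γ) :
    s * (N : Set Γ) = (N : Set Γ) * s := by
  ext z
  constructor
  · rintro ⟨a, ha, b, hb, rfl⟩
    exact ⟨a * b * a⁻¹, hN.conj_mem b hb a, a, ha, by group⟩
  · rintro ⟨b, hb, a, ha, rfl⟩
    exact ⟨a, ha, a⁻¹ * b * a, by simpa using hN.conj_mem b hb a⁻¹, by group⟩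

lemma set_mul_of_le {X P : Subgroup Γ} (h : X ≤ P) :
    (X : Set Γ) * (P : Set Γ) = (P : Set Γ) ∧ (P : Set Γ) * (X : Set Γ) = (P : Set Γ) := by
  constructor
  · apply Set.Subset.antisymm
    · rintro z ⟨a, ha, b, hb, rfl⟩; exact P.mul_mem (h ha) hb
    · intro p hp; exact ⟨1, X.one_mem, p, hp, one_mul p⟩
  · apply Set.Subset.antisymm
    · rintro z ⟨a, ha, b, hb, rfl⟩; exact P.mul_mem ha (h hb)
    · intro p hp; exact ⟨p, hp, 1, X.one_mem, mul_one p⟩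

/-- transfer a Sylow subgroup of `G` to a Sylow subgroup of `(⊤ : Subgroup G)`. -/
def sylowTop {p : ℕ} (P : Sylow p Γ) : Sylow p (⊤ : Subgroup Γ) where
  toSubgroup := Subgroup.comap (⊤ : Subgroup Γ).subtype (P : Subgroup Γ)
  isPGroup' := P.isPGroup'.comap_of_injective _ Subtype.coe_injective
  is_maximal' := by
    intro Q hQ hle
    have hmap : Subgroup.map (⊤ : Subgroup Γ).subtype Q = (P : Subgroup Γ) := by
      apply P.is_maximal' (hQ.map _)
      calc (P : Subgroup Γ) = Subgroup.map (⊤ : Subgroup Γ).subtype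
            (Subgroup.comap (⊤ : Subgroup Γ).subtype (P : Subgroup Γ)) := by
            rw [Subgroup.map_comap_eq, Subgroup.range_subtype, top_inf_eq]
        _ ≤ _ := Subgroup.map_mono hle
    rw [← Subgroup.comap_map_eq_self_of_injective (⊤ : Subgroup Γ).subtype_injective Q, hmap]

lemma sylowTop_map {p : ℕ} (P : Sylow p Γ) :
    Subgroup.map (⊤ : Subgroup Γ).subtype (sylowTop P : Subgroup (⊤ : Subgroup Γ))
      = (P : Subgroup Γ) := by
  show Subgroup.map (⊤ : Subgroup Γ).subtype
      (Subgroup.comap (⊤ : Subgroup Γ).subtype (P : Subgroup Γ)) = _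
  rw [Subgroup.map_comap_eq, Subgroup.range_subtype, top_inf_eq]

lemma subgroupOf_normal_conj {M X : Subgroup Γ} (hXM : X ≤ M)
    (hX : (X.subgroupOf M).Normal) :
    ∀ h ∈ M, ∀ x ∈ X, h * x * h⁻¹ ∈ X := by
  intro h hh x hx
  have hx' : (⟨x, hXM hx⟩ : M) ∈ X.subgroupOf M := by
    rw [Subgroup.mem_subgroupOf]; exact hx
  have := hX.conj_mem _ hx' ⟨h, hh⟩
  rwa [Subgroup.mem_subgroupOf] at this

end Generic

/-! ### Decidable facts about `K` -/

namespace KModel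

open SemidirectProduct

set_option maxRecDepth 100000

lemma cardK : Nat.card K = 72 := by
  rw [Nat.card_eq_fintype_card]; decide

lemma cardV' : Nat.card V' = 9 := by
  rw [Nat.card_eq_fintype_card]; decide

lemma cardM' : Nat.card M' = 36 := by
  rw [Nat.card_eq_fintype_card]; decide

lemma dPow24 : ∀ x : K, x ^ (24:ℕ) = 1 := by decide

lemma dNSK : ∀ x : K, x = 1 ∨ ∃ h : K, ∀ k : ℕ, k < 24 → x ^ k ≠ h * x * h⁻¹ := by decide

lemma dNSM : ∀ x : K, x ∈ M' →
    x = 1 ∨ ∃ h : K, h ∈ M' ∧ ∀ k : ℕ, k < 24 → x ^ k ≠ h * x * h⁻¹ := by decide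

lemma dIndep : ∀ w : K, w ∈ V' → w ≠ 1 →
    (∃ i, i < 3 ∧ ∃ j, j < 3 ∧ w^i * (γK*w*γK⁻¹)^j = aK) ∧
    (∃ i, i < 3 ∧ ∃ j, j < 3 ∧ w^i * (γK*w*γK⁻¹)^j = bK) := by decide

lemma dVspan : ∀ x : K, x ∈ V' → ∃ i, i < 3 ∧ ∃ j, j < 3 ∧ aK^i * bK^j = x := by decide

lemma dB : ∀ x : K, x ∈ M' → (∀ w : K, w ∈ V' → x*w*x⁻¹*w⁻¹ = 1) → x ∈ V' := by decide

lemma dVleM : ∀ x : K, x ∈ V' → x ∈ M' := by decide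

lemma dAb : ∀ x y : K, x ∈ V' → y ∈ V' → x*y = y*x := by decide

lemma dOrd3 : ∀ x : K, x^3 = 1 → x ∈ V' := by decide

lemma dOdd : ∀ x : K, ¬ x ∈ M' → ∀ y : H8,
    ∃ k, k < 8 ∧ (SemidirectProduct.inr x.right : K)^k = (SemidirectProduct.inr y : K) := by
  decide

lemma dMdecomp : ∀ x : K, x ∈ M' →
    ∃ t, t < 4 ∧ (SemidirectProduct.inr x.right : K) = γK ^ t := by decide

lemma dγM : γK ∈ M' := by decide

lemma dcKnotM : cK ∉ M' := by decide

lemma V'leM' : V' ≤ M' := fun x hx => dVleM x hx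

lemma V'_normal : V'.Normal := MonoidHom.normal_ker _

lemma inl_mem_V' (v : V3) : (inl v : K) ∈ V' :=
  MonoidHom.mem_ker.mpr (SemidirectProduct.rightHom_inl v)

lemma inr_right_eq (x : K) : (inr x.right : K) = (inl x.left : K)⁻¹ * x := by
  rw [eq_inv_mul_iff_mul_eq]
  exact SemidirectProduct.inl_left_mul_inr_right x

end KModel

namespace KModel

open SemidirectProduct

lemma irred (W : Subgroup K) (hWV : W ≤ V')
    (hconj : ∀ w ∈ W, γK * w * γK⁻¹ ∈ W) : W = ⊥ ∨ W = V' := by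
  rcases W.bot_or_exists_ne_one with h | ⟨w, hwW, hw1⟩
  · exact Or.inl h
  · right
    obtain ⟨⟨i, _, j, _, hij⟩, ⟨i', _, j', _, hij'⟩⟩ := dIndep w (hWV hwW) hw1
    have haK : aK ∈ W := hij ▸ W.mul_mem (W.pow_mem hwW i) (W.pow_mem (hconj w hwW) j)
    have hbK : bK ∈ W := hij' ▸ W.mul_mem (W.pow_mem hwW i') (W.pow_mem (hconj w hwW) j')
    apply le_antisymm hWV
    intro x hx
    obtain ⟨ix, _, jx, _, hx'⟩ := dVspan x hx
    exact hx' ▸ W.mul_mem (W.pow_mem haK _) (W.pow_mem hbK _)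

lemma normal_of_V'_le {X : Subgroup K} (hV : V' ≤ X) : X.Normal := by
  constructor
  intro x hx g
  have hxr : (inr x.right : K) ∈ X := by
    rw [inr_right_eq x]
    exact X.mul_mem (X.inv_mem (hV (inl_mem_V' _))) hx
  have hyr : (g * x * g⁻¹).right = x.right := by
    show rightHom (g * x * g⁻¹) = rightHom x
    rw [map_mul, map_mul, map_inv, mul_comm (rightHom g) (rightHom x), mul_inv_cancel_right]
  have hdec : g * x * g⁻¹ = inl ((g * x * g⁻¹).left) * inr x.right := by
    conv_lhs => rw [← SemidirectProduct.inl_left_mul_inr_right (g * x * g⁻¹)]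
    rw [hyr]
  rw [hdec]
  exact X.mul_mem (hV (inl_mem_V' _)) hxr

lemma normalM' {X : Subgroup K} (hXM : X ≤ M')
    (hconj : ∀ h ∈ M', ∀ x ∈ X, h * x * h⁻¹ ∈ X) : X.Normal := by
  have hWconj : ∀ w ∈ X ⊓ V', γK * w * γK⁻¹ ∈ X ⊓ V' := by
    intro w hw
    have h1 := Subgroup.mem_inf.mp hw
    exact Subgroup.mem_inf.mpr ⟨hconj γK dγM w h1.1, V'_normal.conj_mem w h1.2 γK⟩
  rcases irred (X ⊓ V') inf_le_right hWconj with hbot | hV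
  · have hXbot : X = ⊥ := by
      rw [Subgroup.eq_bot_iff_forall]
      intro x hx
      have hxV : x ∈ V' := by
        apply dB x (hXM hx)
        intro w hw
        have h1 : x * w * x⁻¹ * w⁻¹ ∈ X := by
          have h2 : w * x⁻¹ * w⁻¹ ∈ X := hconj w (dVleM w hw) x⁻¹ (X.inv_mem hx)
          have h3 : x * w * x⁻¹ * w⁻¹ = x * (w * x⁻¹ * w⁻¹) := by group
          rw [h3]; exact X.mul_mem hx h2
        have h2 : x * w * x⁻¹ * w⁻¹ ∈ V' :=
          V'.mul_mem (V'_normal.conj_mem w hw x) (V'.inv_mem hw)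
        have h4 : x * w * x⁻¹ * w⁻¹ ∈ X ⊓ V' := Subgroup.mem_inf.mpr ⟨h1, h2⟩
        rw [hbot] at h4
        exact Subgroup.mem_bot.mp h4
      have h5 : x ∈ X ⊓ V' := Subgroup.mem_inf.mpr ⟨hx, hxV⟩
      rw [hbot] at h5
      exact Subgroup.mem_bot.mp h5
    rw [hXbot]
    infer_instance
  · exact normal_of_V'_le (hV ▸ inf_le_left)

lemma M'_ne_top : M' ≠ ⊤ := by
  intro h
  exact dcKnotM (h ▸ Subgroup.mem_top cK)

lemma isCoatomM' : IsCoatom M' := by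
  refine ⟨M'_ne_top, ?_⟩
  intro J hJ
  obtain ⟨x, hxJ, hxM⟩ : ∃ x ∈ J, x ∉ M' := SetLike.exists_of_lt hJ
  have hVJ : V' ≤ J := le_trans V'leM' (le_of_lt hJ)
  have hinr : (inr x.right : K) ∈ J := by
    rw [inr_right_eq x]
    exact J.mul_mem (J.inv_mem (hVJ (inl_mem_V' _))) hxJ
  rw [Subgroup.eq_top_iff']
  intro z
  have hzr : (inr z.right : K) ∈ J := by
    obtain ⟨k, _, hk⟩ := dOdd x hxM z.right
    rw [← hk]
    exact J.pow_mem hinr k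
  rw [← SemidirectProduct.inl_left_mul_inr_right z]
  exact J.mul_mem (hVJ (inl_mem_V' _)) hzr

lemma coatomK {Mk : Subgroup K} (hMk : IsCoatom Mk) : Mk = M' ∨ IsPGroup 2 Mk := by
  by_cases hV : V' ≤ Mk
  · left
    have hle : Mk ≤ M' := by
      by_contra hno
      obtain ⟨x, hxMk, hxnot⟩ := SetLike.not_le_iff_exists.mp hno
      apply hMk.1
      have hinr : (inr x.right : K) ∈ Mk := by
        rw [inr_right_eq x]
        exact Mk.mul_mem (Mk.inv_mem (hV (inl_mem_V' _))) hxMk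
      rw [Subgroup.eq_top_iff']
      intro z
      have hzr : (inr z.right : K) ∈ Mk := by
        obtain ⟨k, _, hk⟩ := dOdd x hxnot z.right
        rw [← hk]
        exact Mk.pow_mem hinr k
      rw [← SemidirectProduct.inl_left_mul_inr_right z]
      exact Mk.mul_mem (hV (inl_mem_V' _)) hzr
    rcases eq_or_lt_of_le hle with h | h
    · exact h
    · exact absurd (hMk.2 _ h) M'_ne_top
  · right
    have hWnormal : (Mk ⊓ V').Normal := by
      rw [← Subgroup.normalizer_eq_top_iff, eq_top_iff,
        ← hMk.2 _ (left_lt_sup.mpr hV)]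
      apply sup_le
      · intro m hm
        rw [Subgroup.mem_normalizer_iff]
        intro h
        constructor
        · intro hh
          have h1 := Subgroup.mem_inf.mp hh
          exact Subgroup.mem_inf.mpr
            ⟨Mk.mul_mem (Mk.mul_mem hm h1.1) (Mk.inv_mem hm),
              V'_normal.conj_mem _ h1.2 m⟩
        · intro hh
          have h1 := Subgroup.mem_inf.mp hh
          have e1 : h = m⁻¹ * (m * h * m⁻¹) * m := by group
          rw [e1]
          refine Subgroup.mem_inf.mpr
            ⟨Mk.mul_mem (Mk.mul_mem (Mk.inv_mem hm) h1.1) hm, ?_⟩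
          have := V'_normal.conj_mem _ h1.2 m⁻¹
          simpa using this
      · intro v hv
        rw [Subgroup.mem_normalizer_iff]
        intro h
        have hcomm : ∀ u y : K, u ∈ V' → y ∈ V' → u * y * u⁻¹ = y := by
          intro u y hu hy
          rw [dAb u y hu hy, mul_inv_cancel_right]
        constructor
        · intro hh
          have h1 := Subgroup.mem_inf.mp hh
          rw [hcomm v h hv h1.2]
          exact hh
        · intro hh
          have h1 := Subgroup.mem_inf.mp hh
          have h4 := hcomm v⁻¹ _ (V'.inv_mem hv) h1.2
          rw [inv_inv] at h4
          have h3 : h = v⁻¹ * (v * h * v⁻¹) * v := by group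
          rw [h3, h4]
          exact hh
    have hWbot : Mk ⊓ V' = ⊥ := by
      rcases irred (Mk ⊓ V') inf_le_right
          (fun w hw => hWnormal.conj_mem w hw γK) with h | h
      · exact h
      · exact absurd (h ▸ inf_le_left) hV
    have h3 : ¬ (3 ∣ Nat.card Mk) := by
      intro h3
      haveI : Fact (Nat.Prime 3) := ⟨by norm_num⟩
      obtain ⟨g, hg⟩ := exists_prime_orderOf_dvd_card' (G := Mk) 3 h3
      have hg3 : (g : K)^3 = 1 := by
        have h1 := pow_orderOf_eq_one g
        rw [hg] at h1
        have h2 : ((g ^ 3 : Mk) : K) = ((1 : Mk) : K) := congrArg _ h1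
        simpa using h2
      have hgW : (g : K) ∈ Mk ⊓ V' := Subgroup.mem_inf.mpr ⟨g.2, dOrd3 _ hg3⟩
      rw [hWbot, Subgroup.mem_bot] at hgW
      have : g = 1 := Subtype.ext hgW
      rw [this, orderOf_one] at hg
      norm_num at hg
    have hdvd : Nat.card Mk ∣ 72 := by
      have := Subgroup.card_subgroup_dvd_card Mk
      rwa [cardK] at this
    have h8 : Nat.card Mk ∣ 8 := by
      have hcop : Nat.Coprime (Nat.card Mk) 9 := by
        have h1 : Nat.Coprime 3 (Nat.card Mk) :=
          (Nat.Prime.coprime_iff_not_dvd (by norm_num)).mpr h3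
        have := (h1.symm.pow_right 2)
        simpa [show (9:ℕ) = 3^2 by norm_num] using this
      exact Nat.Coprime.dvd_of_dvd_mul_right hcop
        (by rw [show (8*9 : ℕ) = 72 by norm_num]; exact hdvd)
    obtain ⟨k, _, hcard⟩ := (Nat.dvd_prime_pow Nat.prime_two).mp
      (show Nat.card Mk ∣ 2^3 by rw [show (2:ℕ)^3 = 8 by norm_num]; exact h8)
    exact IsPGroup.of_card hcard

lemma closure_eq_M' : Subgroup.closure {aK, bK, γK} = M' := by
  apply le_antisymm
  · rw [Subgroup.closure_le]
    intro x hx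
    simp only [Set.mem_insert_iff, Set.mem_singleton_iff] at hx
    rcases hx with rfl | rfl | rfl
    · exact (by decide : aK ∈ M')
    · exact (by decide : bK ∈ M')
    · exact dγM
  · intro x hx
    obtain ⟨t, _, ht⟩ := dMdecomp x hx
    have hl : (inl x.left : K) ∈ Subgroup.closure {aK, bK, γK} := by
      obtain ⟨i, _, j, _, hij⟩ := dVspan (inl x.left) (inl_mem_V' _)
      rw [← hij]
      exact Subgroup.mul_mem _
        (Subgroup.pow_mem _ (Subgroup.subset_closure (by simp)) _)
        (Subgroup.pow_mem _ (Subgroup.subset_closure (by simp)) _)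
    have hr : (inr x.right : K) ∈ Subgroup.closure {aK, bK, γK} := by
      rw [ht]
      exact Subgroup.pow_mem _ (Subgroup.subset_closure (by simp)) t
    rw [← SemidirectProduct.inl_left_mul_inr_right x]
    exact Subgroup.mul_mem _ hl hr

end KModel

/-! ### Transfer to `G72` -/

namespace GModel

open KModel SemidirectProduct

instance : Finite G72 := Finite.of_equiv K e72.toEquiv.symm

lemma cardG72 : Nat.card G72 = 72 := by
  rw [Nat.card_congr e72.toEquiv, cardK]

lemma mapM72 : Subgroup.map (e72 : G72 →* K) M72 = M' := by
  have h1 : M72 = (Subgroup.closure { PresentedGroup.of 0, PresentedGroup.of 1,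
      (PresentedGroup.of 2 : PresentedGroup rels72) ^ 2 } : Subgroup G72) := rfl
  rw [h1, MonoidHom.map_closure]
  have h2 : (e72 : G72 →* K) '' { PresentedGroup.of 0, PresentedGroup.of 1,
      (PresentedGroup.of 2 : PresentedGroup rels72) ^ 2 } = {aK, bK, γK} := by
    erw [Set.image_insert_eq, Set.image_insert_eq, Set.image_singleton]
    have ha : (e72 : G72 →* K) (PresentedGroup.of 0) = aK := Φa
    have hb : (e72 : G72 →* K) (PresentedGroup.of 1) = bK := Φb
    have hc : (e72 : G72 →* K) ((PresentedGroup.of 2 : PresentedGroup rels72) ^ 2) = γK := by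
      erw [map_pow]
      show (Φ cG) ^ 2 = γK
      rw [Φc]
      rfl
    erw [ha, hb, hc]
  rw [h2, closure_eq_M']

lemma cardM72 : Nat.card M72 = 36 := by
  have h1 := Nat.card_congr (Subgroup.equivMapOfInjective M72 (e72 : G72 →* K)
    e72.injective).toEquiv
  rw [h1, mapM72, cardM']

lemma coatomM72 : IsCoatom M72 := by
  have h1 := OrderIso.isCoatom_iff (e72.mapSubgroup) M72
  have h2 : e72.mapSubgroup M72 = M' := mapM72
  rw [h2] at h1
  exact h1.mp isCoatomM'

lemma nontrivialM' : Nontrivial M' := by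
  apply Fintype.one_lt_card_iff_nontrivial.mp
  have : Nat.card M' = Fintype.card M' := Nat.card_eq_fintype_card
  rw [← this, cardM']
  norm_num

lemma notSupersolvM72 : ¬ IsSupersolvableGroup M72 := by
  intro h
  have eqv : (M72 : Subgroup G72) ≃* M' :=
    (Subgroup.equivMapOfInjective M72 (e72 : G72 →* K) e72.injective).trans
      (MulEquiv.subgroupCongr mapM72)
  haveI := nontrivialM'
  obtain ⟨g, hg1, hgnorm⟩ := exists_normal_zpowers (isSupersolvable_of_mulEquiv eqv h)
  rcases dNSM (g : K) g.2 with h1 | ⟨b, hbM, hk⟩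
  · exact hg1 (by exact_mod_cast Subtype.ext h1)
  · have hconj : (⟨b, hbM⟩ : M') * g * (⟨b, hbM⟩ : M')⁻¹ ∈ Subgroup.zpowers g :=
      hgnorm.conj_mem g (Subgroup.mem_zpowers g) ⟨b, hbM⟩
    have hg24 : g ^ (24:ℕ) = 1 := by
      have h24 : ((g ^ (24:ℕ) : M') : K) = 1 := by
        push_cast
        exact dPow24 (g : K)
      exact_mod_cast Subtype.ext h24
    obtain ⟨k, hklt, hk'⟩ := zpow_reduce (by norm_num) hg24 hconj
    apply hk k hklt
    have := congrArg (Subgroup.subtype M') hk'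
    push_cast at this
    exact_mod_cast this

lemma notSupersolvG72 : ¬ IsSupersolvableGroup G72 := by
  intro h
  haveI : Nontrivial K := ⟨⟨aK, 1, by decide⟩⟩
  obtain ⟨g, hg1, hgnorm⟩ := exists_normal_zpowers (isSupersolvable_of_mulEquiv e72 h)
  rcases dNSK g with h1 | ⟨b, hk⟩
  · exact hg1 h1
  · have hconj : b * g * b⁻¹ ∈ Subgroup.zpowers g :=
      hgnorm.conj_mem g (Subgroup.mem_zpowers g) b
    obtain ⟨k, hklt, hk'⟩ := zpow_reduce (by norm_num) (dPow24 g) hconj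
    exact hk k hklt hk'

/-! ### The normal Sylow 3-subgroup of `G72` -/

def V72 : Subgroup G72 := Subgroup.map (e72.symm : K →* G72) V'

lemma V72_normal : V72.Normal := Subgroup.Normal.map V'_normal _ e72.symm.surjective

lemma cardV72 : Nat.card V72 = 9 := by
  show Nat.card (Subgroup.map (e72.symm : K →* G72) V') = 9
  have h1 := Nat.card_congr (Subgroup.equivMapOfInjective V' (e72.symm : K →* G72)
    e72.symm.injective).toEquiv
  rw [← h1, cardV']

def P3G : Sylow 3 G72 where
  toSubgroup := V72
  isPGroup' := IsPGroup.of_card (n := 2) (by rw [cardV72]; norm_num)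
  is_maximal' := by
    intro Q hQ hle
    haveI : Fact (Nat.Prime 3) := ⟨by norm_num⟩
    obtain ⟨k, hk⟩ := (IsPGroup.iff_card).mp hQ
    have hdvd : Nat.card Q ∣ 72 := by
      rw [← cardG72]
      exact Subgroup.card_subgroup_dvd_card Q
    have hk2 : k ≤ 2 := by
      by_contra hk3
      have h27 : (27:ℕ) ∣ 3^k := by
        calc (27:ℕ) = 3^3 := by norm_num
          _ ∣ 3^k := Nat.pow_dvd_pow 3 (by omega)
      rw [hk] at hdvd
      have : (27:ℕ) ∣ 72 := dvd_trans h27 hdvd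
      norm_num at this
    have hcardle : Nat.card Q ≤ Nat.card V72 := by
      rw [hk, cardV72]
      calc (3:ℕ)^k ≤ 3^2 := Nat.pow_le_pow_right (by norm_num) hk2
        _ = 9 := by norm_num
    exact (Subgroup.eq_of_le_of_card_ge hle hcardle).symm

/-! ### All maximal subgroups of `G72` are NS-supplemented -/

lemma nsSupplemented (M : Subgroup G72) (hM : IsCoatom M) : IsNSSupplemented M := by
  refine ⟨⊤, ?_, ?_⟩
  · rw [Subgroup.coe_top]
    exact Set.mul_univ ⟨1, M.one_mem⟩
  · intro X hXM hXnorm p hp hpdvd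
    have hcardtop : Nat.card (⊤ : Subgroup G72) = 72 := by
      rw [Subgroup.card_top, cardG72]
    have hp23 : p = 2 ∨ p = 3 := by
      have hdvd72 : p ∣ 72 := by rwa [hcardtop] at hpdvd
      have hle : p ≤ 72 := Nat.le_of_dvd (by norm_num) hdvd72
      have hkey : ∀ q : ℕ, q < 73 → Nat.Prime q → q ∣ 72 → q = 2 ∨ q = 3 := by decide
      exact hkey p (by omega) hp hdvd72
    rcases hp23 with rfl | rfl
    · rcases coatomK ((OrderIso.isCoatom_iff (e72.mapSubgroup) M).mpr hM) with hMc | hM2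
      · have hXnormal : X.Normal := by
          have hmapX : (Subgroup.map (e72 : G72 →* K) X).Normal := by
            apply normalM'
            · rw [← hMc]
              exact Subgroup.map_mono hXM
            · rintro b hb y hy
              obtain ⟨x, hxX, rfl⟩ := hy
              rw [← hMc] at hb
              obtain ⟨m, hmM, rfl⟩ := hb
              refine ⟨m * x * m⁻¹, subgroupOf_normal_conj hXM hXnorm m hmM x hxX, ?_⟩
              rw [map_mul, map_mul, map_inv]
          have hX' : X = Subgroup.comap (e72 : G72 →* K)
              (Subgroup.map (e72 : G72 →* K) X) :=
            (Subgroup.comap_map_eq_self_of_injective e72.injective X).symm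
          rw [hX']
          exact hmapX.comap _
        obtain ⟨P⟩ : Nonempty (Sylow 2 G72) := inferInstance
        refine ⟨sylowTop P, ?_⟩
        rw [sylowTop_map]
        exact (normal_set_mul_comm hXnormal _).symm
      · have hM2' : IsPGroup 2 M := by
          have h1 : M = Subgroup.comap (e72 : G72 →* K)
              (Subgroup.map (e72 : G72 →* K) M) :=
            (Subgroup.comap_map_eq_self_of_injective e72.injective M).symm
          rw [h1]
          exact hM2.comap_of_injective _ e72.injective
        obtain ⟨Q, hQ⟩ := hM2'.exists_le_sylow
        refine ⟨sylowTop Q, ?_⟩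
        rw [sylowTop_map]
        have h1 := set_mul_of_le (le_trans hXM hQ)
        rw [h1.1, h1.2]
    · refine ⟨sylowTop P3G, ?_⟩
      rw [sylowTop_map]
      show (X : Set G72) * (V72 : Set G72) = (V72 : Set G72) * (X : Set G72)
      exact normal_set_mul_comm V72_normal _

end GModel

/-- The group SmallGroup(72,39) has order 72, its subgroup
`M₁ = [⟨a⟩ × ⟨b⟩]⟨c²⟩` is maximal of order 36 and not supersoluble, and yet every
maximal subgroup of the group is NS-supplemented; hence a group all of whose maximal
subgroups are NS-supplemented need not be supersoluble. -/
theorem stmt15 :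
    Nat.card G72 = 72 ∧
    IsCoatom M72 ∧ Nat.card M72 = 36 ∧ ¬ IsSupersolvableGroup M72 ∧
    (∀ M : Subgroup G72, IsCoatom M → IsNSSupplemented M) ∧
    ¬ IsSupersolvableGroup G72 :=
  ⟨GModel.cardG72, GModel.coatomM72, GModel.cardM72, GModel.notSupersolvM72,
    GModel.nsSupplemented, GModel.notSupersolvG72⟩
end
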